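/- The sequence of vertices v₁, v₂, v₃, v₄, v₅, v₆, v₇, v₈ is a chordless 8-cycle in the Lönne graph Γ: v_i and v_{i+1} are joined by an edge for 1 ≤ i ≤ 7, v₈ and v₁ are joined by an edge, and no other pair v_i, v_j (i ≠ j) is joined by an edge. -/
import Mathlib


/-- Vertices of the Lönne graph: quadruples in `{0,1}^4`. -/
abbrev Vtx : Type := Fin 4 → Fin 2

/-- Two distinct vertices `i, j` are joined by an edge iff
`(i_μ − j_μ)·(i_ν − j_ν) ≥ 0` for all `μ, ν` (differences taken in `ℤ`). -/
def LonneEdge (i j : Vtx) : Prop :=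
  i ≠ j ∧ ∀ μ ν : Fin 4,
    0 ≤ (((i μ : ℕ) : ℤ) - ((j μ : ℕ) : ℤ)) * (((i ν : ℕ) : ℤ) - ((j ν : ℕ) : ℤ))

/-- The sequence of vertices `v₁, …, v₈` (zero-indexed: `cycleVtx k` is `v_{k+1}`). -/
def cycleVtx : Fin 8 → Vtx :=
  ![![0,0,0,1], ![0,1,0,1], ![0,1,0,0], ![0,1,1,0], ![0,0,1,0], ![1,0,1,0], ![1,0,0,0],
    ![1,0,0,1]]

/-- `v₁, …, v₈` is a chordless 8-cycle in the Lönne graph: two distinct vertices of the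
cycle are joined by an edge iff they are cyclically adjacent (`j = i + 1` or `i = j + 1`
in `Fin 8`, i.e. modulo 8). -/
theorem cycle_is_chordless_8cycle :
    ∀ i j : Fin 8, i ≠ j →
      (LonneEdge (cycleVtx i) (cycleVtx j) ↔ (j = i + 1 ∨ i = j + 1)) := by
  unfold LonneEdge cycleVtx
  decide
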